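/- arXiv:0903.3922 — 2 statements merged into one kernel-verified Lean document; each statement's English description precedes it below -/
import Mathlib

section
/- Let E and F be Fréchet spaces (complete, metrizable, locally convex topological vector spaces over ℂ), let G and H be Hausdorff topological vector spaces over ℂ, let i_E : E → G and i_F : F → H be injective continuous linear maps, and let T : G → H be a continuous linear map. Assume that for every f ∈ F there exists u ∈ E with T(i_E(u)) = i_F(f). Then for every continuous seminorm p on E there exists a continuous seminorm q on F such that: (i) for every f ∈ F with q(f) > 0 there exists u ∈ E with T(i_E(u)) = i_F(f) and p(u) ≤ q(f); and (ii) for every f ∈ F with q(f) = 0 and every ε > 0 there exists u ∈ E with T(i_E(u)) = i_F(f) and p(u) ≤ ε. -/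
open Filter Topology Set Pointwise

/-- Generic dependent recursion producing a sequence with invariants. -/
private theorem exists_seq_rec' {α : Type*} (init : α) (P : ℕ → α → Prop) (R : ℕ → α → α → Prop)
    (h0 : P 0 init) (hstep : ∀ n a, P n a → ∃ b, P (n + 1) b ∧ R n a b) :
    ∃ f : ℕ → α, f 0 = init ∧ (∀ n, P n (f n)) ∧ ∀ n, R n (f n) (f (n + 1)) := by
  choose g hg1 hg2 using hstep
  let Fs : ∀ n : ℕ, { a : α // P n a } := fun n =>
    Nat.rec ⟨init, h0⟩ (fun n prev => ⟨g n prev.1 prev.2, hg1 n prev.1 prev.2⟩) n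
  refine ⟨fun n => (Fs n).1, rfl, fun n => (Fs n).2, fun n => ?_⟩
  exact hg2 n (Fs n).1 (Fs n).2

/-- Open mapping theorem for Fréchet spaces: a surjective continuous linear map sends
neighborhoods of zero to neighborhoods of zero. -/
private theorem frechet_image_nhds
    {V F : Type*}
    [AddCommGroup V] [Module ℂ V] [UniformSpace V] [IsUniformAddGroup V]
    [ContinuousSMul ℂ V] [CompleteSpace V] [FirstCountableTopology V]
    [Module ℝ V] [IsScalarTower ℝ ℂ V] [SMulCommClass ℝ ℂ V] [LocallyConvexSpace ℝ V]
    [AddCommGroup F] [Module ℂ F] [UniformSpace F] [IsUniformAddGroup F]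
    [ContinuousSMul ℂ F] [CompleteSpace F] [FirstCountableTopology F] [T2Space F]
    [Module ℝ F] [IsScalarTower ℝ ℂ F]
    (π : V →L[ℂ] F) (hsurj : Function.Surjective π)
    {U : Set V} (hU : U ∈ 𝓝 0) : π '' U ∈ 𝓝 0 := by
  haveI : BaireSpace F := by
    haveI : (uniformity F).IsCountablyGenerated :=
      IsUniformAddGroup.uniformity_countably_generated
    letI := UniformSpace.pseudoMetricSpace F
    exact BaireSpace.of_completelyPseudoMetrizable
  haveI : ContinuousConstSMul ℝ F := by
    constructor
    intro r
    have h : (fun x : F => r • x) = fun x : F => (algebraMap ℝ ℂ r) • x := by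
      funext x; rw [algebraMap_smul]
    rw [h]
    exact continuous_const_smul _
  -- Step (a): for balanced convex neighborhoods W of 0 in V,
  -- `closure (π '' W)` is a neighborhood of 0 in F.
  have key : ∀ W : Set V, W ∈ 𝓝 0 → Balanced ℂ W → Convex ℝ W →
      closure (π '' W) ∈ 𝓝 0 := by
    intro W hW hWb hWc
    set C := closure (π '' W) with hCdef
    have hDb : Balanced ℂ (π '' W) := by
      intro a ha
      rintro x hx
      rw [Set.mem_smul_set] at hx
      obtain ⟨y, ⟨v, hv, rfl⟩, rfl⟩ := hx
      refine ⟨a • v, hWb a ha (Set.smul_mem_smul_set hv), ?_⟩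
      simp
    have hDc : Convex ℝ (π '' W) := by
      rintro x ⟨v, hv, rfl⟩ y ⟨w, hw, rfl⟩ a b ha hb hab
      refine ⟨a • v + b • w, hWc hv hw ha hb hab, ?_⟩
      simp [ContinuousLinearMap.map_smul_of_tower]
    have hCb : Balanced ℂ C := hDb.closure
    have hCc : Convex ℝ C := hDc.closure
    -- C absorbs every point
    have habs : ∀ f : F, ∃ n : ℕ, f ∈ ((n : ℂ) + 1) • C := by
      intro f
      obtain ⟨v, rfl⟩ := hsurj f
      have hc : Tendsto (fun n : ℕ => ((n : ℂ) + 1)⁻¹) atTop (𝓝 0) := by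
        rw [tendsto_zero_iff_norm_tendsto_zero]
        have h1 : (fun n : ℕ => ‖((n : ℂ) + 1)⁻¹‖) = fun n : ℕ => 1 / ((n : ℝ) + 1) := by
          funext n
          rw [norm_inv]
          have : ((n : ℂ) + 1) = ((n + 1 : ℕ) : ℂ) := by push_cast; ring
          rw [this, Complex.norm_natCast]
          push_cast; ring
        rw [h1]
        exact tendsto_one_div_add_atTop_nhds_zero_nat
      have h1 : Tendsto (fun n : ℕ => ((n : ℂ) + 1)⁻¹ • v) atTop (𝓝 0) := by
        have := hc.smul (tendsto_const_nhds : Tendsto (fun _ : ℕ => v) atTop (𝓝 v))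
        simpa using this
      obtain ⟨n, hn⟩ := (h1.eventually_mem hW).exists
      refine ⟨n, ?_⟩
      have hne : ((n : ℂ) + 1) ≠ 0 := Nat.cast_add_one_ne_zero n
      have hπv : π v = ((n : ℂ) + 1) • π (((n : ℂ) + 1)⁻¹ • v) := by
        rw [map_smul, smul_inv_smul₀ hne]
      rw [hπv]
      exact Set.smul_mem_smul_set (subset_closure ⟨_, hn, rfl⟩)
    have hcover : ⋃ n : ℕ, ((n : ℂ) + 1) • C = univ :=
      eq_univ_of_forall fun f => mem_iUnion.2 (habs f)
    have hclosed : ∀ n : ℕ, IsClosed (((n : ℂ) + 1) • C) := by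
      intro n
      have := isClosedMap_smul₀ ((n : ℂ) + 1) C isClosed_closure
      simpa using this
    obtain ⟨n, hint⟩ := nonempty_interior_of_iUnion_of_closed hclosed hcover
    have hne : ((n : ℂ) + 1) ≠ 0 := Nat.cast_add_one_ne_zero n
    rw [interior_smul₀ hne] at hint
    obtain ⟨x, hx⟩ := hint
    rw [Set.mem_smul_set] at hx
    obtain ⟨y, hy, rfl⟩ := hx
    have hyneg : -y ∈ C := by
      have := hCb (-1 : ℂ) (by norm_num) (Set.smul_mem_smul_set (interior_subset hy))
      simpa using this
    have h0int : (0 : F) ∈ interior C := by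
      have := hCc.combo_interior_self_mem_interior hy hyneg
        (a := 1 / 2) (b := 1 / 2) (by norm_num) (by norm_num) (by norm_num)
      simpa [smul_neg] using this
    exact mem_interior_iff_mem_nhds.1 h0int
  -- Step (b): build shrinking balanced convex neighborhoods.
  have shrink : ∀ N : Set V, N ∈ 𝓝 0 →
      ∃ W, W ∈ 𝓝 0 ∧ Balanced ℂ W ∧ Convex ℝ W ∧ W + W ⊆ N := by
    intro N hN
    obtain ⟨M, hM, hMadd⟩ := exists_nhds_zero_half hN
    obtain ⟨W, ⟨hW1, hW2⟩, hWM⟩ :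
        ∃ W, (W ∈ 𝓝 (0 : V) ∧ (Balanced ℂ W ∧ Convex ℝ W)) ∧ W ⊆ M := by
      obtain ⟨W', ⟨hW'n, hW'c⟩, hW'M⟩ := (LocallyConvexSpace.convex_basis_zero ℝ V).mem_iff.1 hM
      refine ⟨balancedCore ℂ W', ⟨balancedCore_mem_nhds_zero hW'n, balancedCore_balanced W', ?_⟩,
        (balancedCore_subset W').trans hW'M⟩
      rw [balancedCore_eq_iInter (mem_of_mem_nhds hW'n)]
      refine convex_iInter fun r => convex_iInter fun _ => ?_
      rw [← Set.image_smul]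
      exact hW'c.is_linear_image ⟨smul_add r, fun c x => (smul_comm c r x).symm⟩
    exact ⟨W, hW1, hW2.1, hW2.2,
      Set.add_subset_iff.2 fun a ha b hb => hMadd a (hWM ha) b (hWM hb)⟩
  obtain ⟨B, hB⟩ := (𝓝 (0 : V)).exists_antitone_basis
  obtain ⟨W0, hW0n, hW0b, hW0c, hW0add⟩ := shrink U hU
  obtain ⟨Ws, hWs0, hWsP, hWsR⟩ := exists_seq_rec' W0
    (fun _ W => W ∈ 𝓝 0 ∧ Balanced ℂ W ∧ Convex ℝ W)
    (fun n a b => b + b ⊆ a ∧ b ⊆ B n)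
    ⟨hW0n, hW0b, hW0c⟩
    (by
      intro n a ha
      obtain ⟨W, h1, h2, h3, h4⟩ := shrink (a ∩ B n) (inter_mem ha.1 (hB.1.mem_of_mem trivial))
      have hsub : W ⊆ a ∩ B n := by
        intro x hx
        have h0 : (0 : V) ∈ W := mem_of_mem_nhds h1
        have := h4 (Set.add_mem_add hx h0)
        simpa using this
      exact ⟨W, ⟨h1, h2, h3⟩, fun x hx => (h4 hx).1, fun x hx => (hsub hx).2⟩)
  have hWmem : ∀ n, Ws n ∈ 𝓝 0 := fun n => (hWsP n).1
  have hWbal : ∀ n, Balanced ℂ (Ws n) := fun n => (hWsP n).2.1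
  have hW0mem : ∀ n, (0 : V) ∈ Ws n := fun n => mem_of_mem_nhds (hWmem n)
  have hWadd : ∀ n, Ws (n + 1) + Ws (n + 1) ⊆ Ws n := fun n => (hWsR n).1
  have hWB : ∀ n, Ws (n + 1) ⊆ B n := fun n => (hWsR n).2
  have hWsucc : ∀ n, Ws (n + 1) ⊆ Ws n := by
    intro n x hx
    have := hWadd n (Set.add_mem_add hx (hW0mem (n + 1)))
    simpa using this
  have hWle : ∀ {m n : ℕ}, m ≤ n → Ws n ⊆ Ws m := by
    intro m n h
    induction h with
    | refl => exact fun x hx => hx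
    | step h ih => exact fun x hx => ih (hWsucc _ hx)
  -- the closures of images
  set D : ℕ → Set F := fun n => closure (π '' Ws n) with hDdef
  have hDmem : ∀ n, D n ∈ 𝓝 0 := fun n =>
    key (Ws n) (hWmem n) (hWbal n) (hWsP n).2.2
  -- main claim: D 1 ⊆ π '' U
  have hmain : D 1 ⊆ π '' U := by
    intro f hf
    -- build approximating partial sums
    have hstep : ∀ n (x : V), f - π x ∈ D (n + 1) →
        ∃ y, (f - π y ∈ D (n + 2)) ∧ y - x ∈ Ws (n + 1) := by
      intro n x hx
      have hnb : (fun z : F => (f - π x) - z) ⁻¹' D (n + 2) ∈ 𝓝 (f - π x) := by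
        have hc : Tendsto (fun z : F => (f - π x) - z) (𝓝 (f - π x))
            (𝓝 ((f - π x) - (f - π x))) := tendsto_const_nhds.sub tendsto_id
        rw [sub_self] at hc
        exact hc (hDmem (n + 2))
      obtain ⟨z, hz1, hz2⟩ := mem_closure_iff_nhds.1 hx _ hnb
      obtain ⟨w, hw, rfl⟩ := hz2
      refine ⟨x + w, ?_, by simp [hw]⟩
      have : f - π (x + w) = (f - π x) - π w := by
        rw [map_add]; abel
      rw [this]
      exact hz1
    obtain ⟨s, hs0, hsP, hsR⟩ := exists_seq_rec' (0 : V)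
      (fun n x => f - π x ∈ D (n + 1))
      (fun n a b => b - a ∈ Ws (n + 1))
      (by simpa using hf)
      hstep
    -- partial sum differences
    have hsum : ∀ d n, s (n + d) - s n ∈ Ws n := by
      intro d
      induction d with
      | zero => intro n; simpa using hW0mem n
      | succ d ih =>
        intro n
        have h1 : s (n + 1) - s n ∈ Ws (n + 1) := hsR n
        have h2 : s ((n + 1) + d) - s (n + 1) ∈ Ws (n + 1) := ih (n + 1)
        have e : n + (d + 1) = (n + 1) + d := by omega
        have h3 : s (n + (d + 1)) - s n =
            (s ((n + 1) + d) - s (n + 1)) + (s (n + 1) - s n) := by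
          rw [sub_add_sub_cancel, e]
        rw [h3]
        exact hWadd n (Set.add_mem_add h2 h1)
    -- Cauchy
    have hcauchy : CauchySeq s := by
      apply cauchySeq_of_controlled (fun n : ℕ => {q : V × V | q.2 - q.1 ∈ Ws n})
      · intro t ht
        rw [uniformity_eq_comap_nhds_zero V] at ht
        obtain ⟨M, hM, hMt⟩ := Filter.mem_comap.1 ht
        obtain ⟨k, -, hk⟩ := hB.1.mem_iff.1 hM
        exact ⟨k + 1, fun q hq => hMt (hk ((hWB k) hq))⟩
      · intro N m n hm hn
        show s n - s m ∈ Ws N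
        rcases le_total m n with h | h
        · obtain ⟨d, rfl⟩ := Nat.exists_eq_add_of_le h
          exact hWle hm (hsum d m)
        · obtain ⟨d, rfl⟩ := Nat.exists_eq_add_of_le h
          have h1 : s (n + d) - s n ∈ Ws N := hWle hn (hsum d n)
          have := (hWbal N).neg_mem_iff.2 h1
          simpa using this
    obtain ⟨v, hv⟩ := cauchySeq_tendsto_of_complete hcauchy
    -- v ∈ U
    have hsW0 : ∀ n, s n ∈ Ws 0 := by
      intro n
      have := hsum n 0
      simpa [hs0] using this
    have hvcl : v ∈ closure (Ws 0) :=
      mem_closure_of_tendsto hv (Eventually.of_forall hsW0)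
    have hvU : v ∈ U := by
      have hx' : (fun y : V => v - y) ⁻¹' Ws 0 ∈ 𝓝 v := by
        have hc : Tendsto (fun y : V => v - y) (𝓝 v) (𝓝 (v - v)) :=
          tendsto_const_nhds.sub tendsto_id
        rw [sub_self] at hc
        exact hc (hWmem 0)
      obtain ⟨z, hz1, hz2⟩ := mem_closure_iff_nhds.1 hvcl _ hx'
      have : v = z + (v - z) := by abel
      rw [hWs0] at hz1 hz2
      rw [this]
      exact hW0add (Set.add_mem_add hz2 hz1)
    -- f = π v
    have htend0 : Tendsto (fun n => f - π (s n)) atTop (𝓝 0) := by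
      rw [(closed_nhds_basis (0 : F)).tendsto_right_iff]
      rintro M ⟨hM, hMc⟩
      have hpre : π ⁻¹' M ∈ 𝓝 (0 : V) := by
        have hc := π.continuous.tendsto (0 : V)
        rw [map_zero] at hc
        exact hc hM
      obtain ⟨k, -, hkB⟩ := hB.1.mem_iff.1 hpre
      filter_upwards [eventually_ge_atTop k] with n hn
      have h1 : f - π (s n) ∈ D (n + 1) := hsP n
      have h2 : π '' Ws (n + 1) ⊆ M := by
        rintro _ ⟨w, hw, rfl⟩
        exact hkB (hB.2 hn (hWB n hw))
      exact closure_minimal h2 hMc h1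
    have h2 : Tendsto (fun n => f - π (s n)) atTop (𝓝 (f - π v)) :=
      tendsto_const_nhds.sub ((π.continuous.tendsto v).comp hv)
    have hfv : f - π v = 0 := tendsto_nhds_unique h2 htend0
    exact ⟨v, hvU, (sub_eq_zero.1 hfv).symm⟩
  exact mem_of_superset (hDmem 1) hmain


set_option maxHeartbeats 1000000 in
set_option synthInstance.maxHeartbeats 400000 in
/-- Open-mapping-theorem principle: if `E, F` are Fréchet spaces (complete metrizable
locally convex TVS over `ℂ`), `G, H` Hausdorff TVS over `ℂ`, `i_E : E → G`, `i_F : F → H`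
injective continuous linear maps, `T : G → H` continuous linear, and the equation
`T (i_E u) = i_F f` is solvable for every `f ∈ F`, then for every continuous seminorm `p`
on `E` there is a continuous seminorm `q` on `F` such that the equation has a solution
with `p u ≤ q f` whenever `q f > 0`, and with `p u ≤ ε` for every `ε > 0` when `q f = 0`. -/
theorem open_mapping_seminorm_solvability
    {E F G H : Type*}
    [AddCommGroup E] [Module ℂ E] [UniformSpace E] [IsUniformAddGroup E]
    [ContinuousSMul ℂ E] [CompleteSpace E] [TopologicalSpace.MetrizableSpace E]
    [Module ℝ E] [IsScalarTower ℝ ℂ E] [LocallyConvexSpace ℝ E]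
    [AddCommGroup F] [Module ℂ F] [UniformSpace F] [IsUniformAddGroup F]
    [ContinuousSMul ℂ F] [CompleteSpace F] [TopologicalSpace.MetrizableSpace F]
    [Module ℝ F] [IsScalarTower ℝ ℂ F] [LocallyConvexSpace ℝ F]
    [AddCommGroup G] [Module ℂ G] [TopologicalSpace G] [IsTopologicalAddGroup G]
    [ContinuousSMul ℂ G] [T2Space G]
    [AddCommGroup H] [Module ℂ H] [TopologicalSpace H] [IsTopologicalAddGroup H]
    [ContinuousSMul ℂ H] [T2Space H]
    (iE : E →L[ℂ] G) (iF : F →L[ℂ] H)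
    (hiE : Function.Injective iE) (hiF : Function.Injective iF)
    (T : G →L[ℂ] H)
    (hsolv : ∀ f : F, ∃ u : E, T (iE u) = iF f)
    (p : Seminorm ℂ E) (hp : Continuous p) :
    ∃ q : Seminorm ℂ F, Continuous q ∧
      (∀ f : F, 0 < q f → ∃ u : E, T (iE u) = iF f ∧ p u ≤ q f) ∧
      (∀ f : F, q f = 0 → ∀ ε : ℝ, 0 < ε → ∃ u : E, T (iE u) = iF f ∧ p u ≤ ε) := by
  classical
  -- the "solution values" sets and the induced quotient seminorm
  set Sol : F → Set ℝ := fun f => (fun u => p u) '' {u : E | T (iE u) = iF f} with hSol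
  have hSolne : ∀ f, (Sol f).Nonempty := fun f => by
    obtain ⟨u, hu⟩ := hsolv f; exact ⟨p u, u, hu, rfl⟩
  have hSolbdd : ∀ f, BddBelow (Sol f) :=
    fun f => ⟨0, by rintro r ⟨u, hu, rfl⟩; exact apply_nonneg p u⟩
  have hq0nonneg : ∀ f, 0 ≤ sInf (Sol f) := fun f =>
    le_csInf (hSolne f) (by rintro r ⟨u, hu, rfl⟩; exact apply_nonneg p u)
  have hzeromem : (0 : ℝ) ∈ Sol 0 := ⟨0, by simp, map_zero p⟩
  have hsmul : ∀ (c : ℂ) (f : F), sInf (Sol (c • f)) = ‖c‖ * sInf (Sol f) := by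
    intro c f
    rcases eq_or_ne c 0 with rfl | hc
    · simp only [zero_smul, norm_zero, zero_mul]
      exact le_antisymm (csInf_le (hSolbdd 0) hzeromem) (hq0nonneg 0)
    · have hnc : ‖c‖ ≠ 0 := norm_ne_zero_iff.2 hc
      have hset : Sol (c • f) = ‖c‖ • Sol f := by
        ext r
        constructor
        · rintro ⟨u, hu, rfl⟩
          have hu' : T (iE (c⁻¹ • u)) = iF f := by
            simp only [mem_setOf_eq] at hu
            rw [map_smul, map_smul, hu, map_smul, smul_smul, inv_mul_cancel₀ hc, one_smul]
          refine ⟨p (c⁻¹ • u), ⟨c⁻¹ • u, hu', rfl⟩, ?_⟩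
          show ‖c‖ * p (c⁻¹ • u) = p u
          rw [map_smul_eq_mul, norm_inv, ← mul_assoc, mul_inv_cancel₀ hnc, one_mul]
        · rintro ⟨r', ⟨u, hu, rfl⟩, rfl⟩
          have hu' : T (iE (c • u)) = iF (c • f) := by
            simp only [mem_setOf_eq] at hu
            rw [map_smul, map_smul, hu, map_smul]
          refine ⟨c • u, hu', ?_⟩
          show p (c • u) = ‖c‖ * p u
          exact map_smul_eq_mul p c u
      rw [hset, Real.sInf_smul_of_nonneg (norm_nonneg c), smul_eq_mul]
  have htri : ∀ f g : F, sInf (Sol (f + g)) ≤ sInf (Sol f) + sInf (Sol g) := by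
    intro f g
    have hkey : ∀ a ∈ Sol f, ∀ b ∈ Sol g, sInf (Sol (f + g)) ≤ a + b := by
      rintro _ ⟨u, hu, rfl⟩ _ ⟨w, hw, rfl⟩
      simp only [mem_setOf_eq] at hu hw
      have hmem : p (u + w) ∈ Sol (f + g) :=
        ⟨u + w, by simp only [mem_setOf_eq, map_add, hu, hw], rfl⟩
      exact le_trans (csInf_le (hSolbdd _) hmem) (map_add_le_add p u w)
    have h1 : ∀ a ∈ Sol f, sInf (Sol (f + g)) - a ≤ sInf (Sol g) := fun a ha =>
      le_csInf (hSolne g) fun b hb => by linarith [hkey a ha b hb]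
    have h2 : sInf (Sol (f + g)) - sInf (Sol g) ≤ sInf (Sol f) :=
      le_csInf (hSolne f) fun a ha => by linarith [h1 a ha]
    linarith
  set q0 : Seminorm ℂ F :=
    { toFun := fun f => sInf (Sol f)
      map_zero' := le_antisymm (csInf_le (hSolbdd 0) hzeromem) (hq0nonneg 0)
      add_le' := htri
      neg' := fun f => by
        have h := hsmul (-1) f
        simpa using h
      smul' := hsmul } with hq0def
  have hq0apply : ∀ f, q0 f = sInf (Sol f) := fun f => rfl
  -- the graph space
  set K : (E × F) →L[ℂ] H :=
    (T.comp (iE.comp (ContinuousLinearMap.fst ℂ E F))) -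
      (iF.comp (ContinuousLinearMap.snd ℂ E F)) with hK
  set V : Submodule ℂ (E × F) := LinearMap.ker (K : (E × F) →ₗ[ℂ] H) with hV
  have hmemV : ∀ x : E × F, x ∈ V ↔ T (iE x.1) = iF x.2 := by
    intro x
    rw [hV, LinearMap.mem_ker]
    constructor
    · intro h
      have : T (iE x.1) - iF x.2 = 0 := h
      exact sub_eq_zero.1 this
    · intro h
      show T (iE x.1) - iF x.2 = 0
      rw [h, sub_self]
  have hVc : IsClosed (V : Set (E × F)) := by
    have h : (V : Set (E × F)) = K ⁻¹' {0} := by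
      ext x
      simp [hV, LinearMap.mem_ker]
    rw [h]
    exact isClosed_singleton.preimage K.continuous
  haveI : IsUniformAddGroup ↥V := inferInstanceAs (IsUniformAddGroup V.toAddSubgroup)
  haveI : CompleteSpace ↥V := hVc.completeSpace_coe
  haveI : FirstCountableTopology E := inferInstance
  haveI : FirstCountableTopology F := inferInstance
  haveI : FirstCountableTopology (E × F) := inferInstance
  haveI : FirstCountableTopology ↥V :=
    TopologicalSpace.firstCountableTopology_induced ↥V (E × F) Subtype.val
  haveI : SMulCommClass ℝ ℂ (E × F) := inferInstance
  haveI : SMulCommClass ℝ ℂ ↥V := ⟨fun r c x => Subtype.ext (smul_comm r c (x : E × F))⟩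
  haveI : LocallyConvexSpace ℝ ↥V := by
    let lin : ↥V →ₗ[ℝ] (E × F) :=
      { toFun := Subtype.val, map_add' := fun a b => rfl,
        map_smul' := fun r a => Submodule.coe_smul_of_tower r a }
    exact LocallyConvexSpace.induced lin
  set π : ↥V →L[ℂ] F := (ContinuousLinearMap.snd ℂ E F).comp V.subtypeL with hπ
  have hπapply : ∀ v : ↥V, π v = (v : E × F).2 := fun v => rfl
  have hπsurj : Function.Surjective π := by
    intro f
    obtain ⟨u, hu⟩ := hsolv f
    exact ⟨⟨(u, f), (hmemV (u, f)).2 hu⟩, rfl⟩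
  -- continuity of q0
  have hq0small : ∀ ε : ℝ, 0 < ε → {g : F | q0 g < ε} ∈ 𝓝 0 := by
    intro ε hε
    set Uε : Set ↥V := {v : ↥V | p ((v : E × F).1) < ε} with hUε
    have hc : Continuous fun v : ↥V => p ((v : E × F).1) :=
      hp.comp (continuous_fst.comp continuous_subtype_val)
    have hUεn : Uε ∈ 𝓝 0 := by
      have h : Uε = (fun v : ↥V => p ((v : E × F).1)) ⁻¹' Iio ε := rfl
      rw [h]
      refine (isOpen_Iio.preimage hc).mem_nhds ?_
      show p (((0 : ↥V) : E × F).1) ∈ Iio ε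
      simp [hε]
    refine mem_of_superset (frechet_image_nhds π hπsurj hUεn) ?_
    rintro g ⟨v, hvU, rfl⟩
    have hvm : T (iE ((v : E × F)).1) = iF ((v : E × F)).2 := (hmemV _).1 v.2
    have hmem : p ((v : E × F).1) ∈ Sol (π v) := by
      refine ⟨(v : E × F).1, ?_, rfl⟩
      rw [mem_setOf_eq, hvm, hπapply]
    exact lt_of_le_of_lt (csInf_le (hSolbdd _) hmem) hvU
  have hq0cont : Continuous q0 := by
    apply Seminorm.continuous (r := 1)
    rw [Seminorm.ball_zero_eq]
    exact hq0small 1 one_pos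
  refine ⟨q0 + q0, ?_, ?_, ?_⟩
  · have h : ⇑(q0 + q0) = fun f => q0 f + q0 f := rfl
    rw [h]
    exact hq0cont.add hq0cont
  · intro f hf
    rw [Seminorm.add_apply] at hf
    have hq0pos : 0 < q0 f := by
      have := hq0nonneg f
      rw [← hq0apply f] at this
      linarith
    have hlt : sInf (Sol f) < (q0 + q0) f := by
      rw [Seminorm.add_apply, ← hq0apply f]
      linarith
    obtain ⟨a, ⟨u, hu, rfl⟩, ha⟩ := exists_lt_of_csInf_lt (hSolne f) hlt
    exact ⟨u, hu, le_of_lt ha⟩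
  · intro f hf ε hε
    rw [Seminorm.add_apply] at hf
    have hq0z : q0 f = 0 := by
      have := hq0nonneg f
      rw [← hq0apply f] at this
      linarith
    have hlt : sInf (Sol f) < ε := by
      rw [← hq0apply f, hq0z]
      exact hε
    obtain ⟨a, ⟨u, hu, rfl⟩, ha⟩ := exists_lt_of_csInf_lt (hSolne f) hlt
    exact ⟨u, hu, le_of_lt ha⟩
end

section
/- Let U be a topological space, Y a metric space, φ : U → Y a continuous injective map, A a closed subset of U, and K, L, M compact subsets of U such that K is contained in the interior of L and in the interior of M, and such that L ∩ A and M ∩ A are both nonempty. Define d₁(x) = dist(φ(x), φ(L ∩ A)) and d₂(x) = dist(φ(x), φ(M ∩ A)) for x ∈ U. Then d₁ ∼_K d₂, i.e. there exists a constant C ≥ 1 such that d₁(x) ≤ C·d₂(x) and d₂(x) ≤ C·d₁(x) for all x ∈ K. -/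
open Metric

private lemma key_one_sided
    {U Y : Type*} [TopologicalSpace U] [MetricSpace Y]
    (φ : U → Y) (hφc : Continuous φ) (hφi : Function.Injective φ)
    (A : Set U) (hA : IsClosed A)
    (K L M : Set U) (hK : IsCompact K) (hL : IsCompact L) (hM : IsCompact M)
    (hKL : K ⊆ interior L) (hKM : K ⊆ interior M)
    (hLA : (L ∩ A).Nonempty) (hMA : (M ∩ A).Nonempty) :
    ∃ C : ℝ, 1 ≤ C ∧ ∀ x ∈ K,
      Metric.infDist (φ x) (φ '' (L ∩ A)) ≤ C * Metric.infDist (φ x) (φ '' (M ∩ A)) := by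
  set d₁ : U → ℝ := fun y => Metric.infDist (φ y) (φ '' (L ∩ A)) with hd₁
  set d₂ : U → ℝ := fun y => Metric.infDist (φ y) (φ '' (M ∩ A)) with hd₂
  have hd₁c : Continuous d₁ := (continuous_infDist_pt _).comp hφc
  have hd₂c : Continuous d₂ := (continuous_infDist_pt _).comp hφc
  have hMAcomp : IsCompact (M ∩ A) := hM.inter_right hA
  have himg : IsCompact (φ '' (M ∩ A)) := hMAcomp.image hφc
  have himgne : (φ '' (M ∩ A)).Nonempty := hMA.image φ
  have hLAne : (φ '' (L ∩ A)).Nonempty := hLA.image φ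
  -- local bound at each point of K
  have local_bound : ∀ x ∈ K, ∃ C : ℝ, 1 ≤ C ∧ ∀ᶠ y in nhds x, d₁ y ≤ C * d₂ y := by
    intro x hx
    rcases eq_or_lt_of_le (Metric.infDist_nonneg : (0:ℝ) ≤ d₂ x) with h0 | hpos
    · -- d₂ x = 0, so x ∈ M ∩ A
      have hxmem : φ x ∈ φ '' (M ∩ A) :=
        (himg.isClosed.mem_iff_infDist_zero himgne).2 h0.symm
      obtain ⟨p, hp, hpx⟩ := hxmem
      have hxMA : x ∈ M ∩ A := by rwa [hφi hpx] at hp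
      set S : Set U := (M ∩ A) \ interior L with hS
      by_cases hSne : S.Nonempty
      · have hScomp : IsCompact S := hMAcomp.diff isOpen_interior
        have hSimg : IsCompact (φ '' S) := hScomp.image hφc
        have hxnot : φ x ∉ φ '' S := by
          rintro ⟨q, hq, hqx⟩
          have hqeq : q = x := hφi hqx
          exact hq.2 (hqeq ▸ hKL hx)
        have hδ : 0 < Metric.infDist (φ x) (φ '' S) :=
          (hSimg.isClosed.notMem_iff_infDist_pos (hSne.image φ)).1 hxnot
        set δ := Metric.infDist (φ x) (φ '' S) with hδdef
        refine ⟨1, le_refl 1, ?_⟩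
        have h1 : ∀ᶠ y in nhds x, dist (φ y) (φ x) < δ / 3 := by
          have : Continuous fun y => dist (φ y) (φ x) := (continuous_id.dist continuous_const).comp hφc
          have := this.continuousAt (x := x)
          exact this.eventually_lt continuousAt_const (by simpa using by positivity)
        have h2 : ∀ᶠ y in nhds x, d₂ y < δ / 3 := by
          have := hd₂c.continuousAt (x := x)
          have hd2x : d₂ x = 0 := h0.symm
          exact this.eventually_lt continuousAt_const (by rw [hd2x]; positivity)
        filter_upwards [h1, h2] with y hy1 hy2
        obtain ⟨z, hz, hzd⟩ := himg.exists_infDist_eq_dist himgne (φ y)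
        obtain ⟨p, hpMA, rfl⟩ := hz
        have hpL : p ∈ interior L := by
          by_contra hpnL
          have hpS : φ p ∈ φ '' S := ⟨p, ⟨hpMA, hpnL⟩, rfl⟩
          have : δ ≤ dist (φ x) (φ p) := Metric.infDist_le_dist_of_mem hpS
          have hd : dist (φ x) (φ p) ≤ dist (φ x) (φ y) + dist (φ y) (φ p) := dist_triangle _ _ _
          rw [dist_comm (φ x) (φ y)] at hd
          have : δ ≤ δ / 3 + δ / 3 := by
            calc δ ≤ dist (φ x) (φ p) := this
            _ ≤ dist (φ y) (φ x) + dist (φ y) (φ p) := hd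
            _ ≤ δ / 3 + δ / 3 := by
                have : dist (φ y) (φ p) = d₂ y := hzd.symm
                rw [this]; exact add_le_add hy1.le hy2.le
          linarith
        have hpLA : φ p ∈ φ '' (L ∩ A) := ⟨p, ⟨interior_subset hpL, hpMA.2⟩, rfl⟩
        calc d₁ y ≤ dist (φ y) (φ p) := Metric.infDist_le_dist_of_mem hpLA
        _ = d₂ y := hzd.symm
        _ = 1 * d₂ y := (one_mul _).symm
      · -- S empty : M ∩ A ⊆ L ∩ A, so d₁ ≤ d₂ globally
        refine ⟨1, le_refl 1, Filter.Eventually.of_forall fun y => ?_⟩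
        rw [one_mul]
        apply Metric.infDist_le_infDist_of_subset _ himgne
        apply Set.image_mono
        intro q hq
        have : q ∈ interior L := by
          by_contra hqn
          exact hSne ⟨q, hq, hqn⟩
        exact ⟨interior_subset this, hq.2⟩
    · -- d₂ x > 0
      refine ⟨max 1 ((d₁ x + 1) * 2 / d₂ x), le_max_left _ _, ?_⟩
      have h1 : ∀ᶠ y in nhds x, d₂ x / 2 < d₂ y :=
        (continuousAt_const (x := x)).eventually_lt hd₂c.continuousAt (by linarith)
      have h2 : ∀ᶠ y in nhds x, d₁ y < d₁ x + 1 :=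
        (hd₁c.continuousAt (x := x)).eventually_lt continuousAt_const (by linarith)
      filter_upwards [h1, h2] with y hy1 hy2
      have hC : (d₁ x + 1) * 2 / d₂ x ≤ max 1 ((d₁ x + 1) * 2 / d₂ x) := le_max_right _ _
      have hd2y : 0 < d₂ y := lt_trans (by linarith) hy1
      have hd1x : 0 ≤ d₁ x := Metric.infDist_nonneg
      calc d₁ y ≤ d₁ x + 1 := hy2.le
      _ = ((d₁ x + 1) * 2 / d₂ x) * (d₂ x / 2) := by
          have hne : d₂ x ≠ 0 := hpos.ne'
          field_simp
      _ ≤ ((d₁ x + 1) * 2 / d₂ x) * d₂ y := by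
          apply mul_le_mul_of_nonneg_left hy1.le
          positivity
      _ ≤ max 1 ((d₁ x + 1) * 2 / d₂ x) * d₂ y :=
          mul_le_mul_of_nonneg_right hC hd2y.le
  -- combine by compactness
  choose! C hC1 hC2 using local_bound
  set V : ∀ x ∈ K, Set U := fun x _ => {y | d₁ y ≤ C x * d₂ y} with hV
  have hVmem : ∀ (x : U) (hx : x ∈ K), V x hx ∈ nhds x := fun x hx => hC2 x hx
  obtain ⟨t, ht⟩ := hK.elim_nhds_subcover' V hVmem
  refine ⟨1 + ∑ x ∈ t, C x, by
    have : 0 ≤ ∑ x ∈ t, C ↑x := Finset.sum_nonneg fun x _ => le_trans zero_le_one (hC1 x.1 x.2)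
    linarith, ?_⟩
  intro x hx
  obtain ⟨i, hi, hxi⟩ := Set.mem_iUnion₂.1 (ht hx)
  have hle : C i ≤ 1 + ∑ x ∈ t, C x := by
    have h1 : C (i : U) ≤ ∑ x ∈ t, C ↑x :=
      Finset.single_le_sum (fun j _ => le_trans zero_le_one (hC1 j.1 j.2)) hi
    linarith
  calc d₁ x ≤ C i * d₂ x := hxi
  _ ≤ (1 + ∑ x ∈ t, C x) * d₂ x :=
      mul_le_mul_of_nonneg_right hle Metric.infDist_nonneg

/-- Lemma 7.1: if `φ : U → Y` is continuous and injective, `A ⊆ U` is closed, and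
`K, L, M` are compact subsets of `U` with `K` contained in the interiors of `L` and of `M`,
and `L ∩ A`, `M ∩ A` are nonempty, then the functions
`d₁(x) = dist(φ(x), φ(L ∩ A))` and `d₂(x) = dist(φ(x), φ(M ∩ A))` are equivalent on `K`. -/
theorem dist_to_image_equiv_on_compact
    {U Y : Type*} [TopologicalSpace U] [MetricSpace Y]
    (φ : U → Y) (hφc : Continuous φ) (hφi : Function.Injective φ)
    (A : Set U) (hA : IsClosed A)
    (K L M : Set U) (hK : IsCompact K) (hL : IsCompact L) (hM : IsCompact M)
    (hKL : K ⊆ interior L) (hKM : K ⊆ interior M)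
    (hLA : (L ∩ A).Nonempty) (hMA : (M ∩ A).Nonempty) :
    ∃ C : ℝ, 1 ≤ C ∧ ∀ x ∈ K,
      Metric.infDist (φ x) (φ '' (L ∩ A)) ≤ C * Metric.infDist (φ x) (φ '' (M ∩ A)) ∧
      Metric.infDist (φ x) (φ '' (M ∩ A)) ≤ C * Metric.infDist (φ x) (φ '' (L ∩ A)) := by
  obtain ⟨C₁, hC₁, h₁⟩ := key_one_sided φ hφc hφi A hA K L M hK hL hM hKL hKM hLA hMA
  obtain ⟨C₂, hC₂, h₂⟩ := key_one_sided φ hφc hφi A hA K M L hK hM hL hKM hKL hMA hLA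
  refine ⟨max C₁ C₂, le_trans hC₁ (le_max_left _ _), fun x hx => ⟨?_, ?_⟩⟩
  · exact le_trans (h₁ x hx) (mul_le_mul_of_nonneg_right (le_max_left _ _) Metric.infDist_nonneg)
  · exact le_trans (h₂ x hx) (mul_le_mul_of_nonneg_right (le_max_right _ _) Metric.infDist_nonneg)
end
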